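/- For every n ≥ 2, the set-coloring Ramsey number R_{3,2}(P_3, P_n, P_n) equals n; that is, n is the least N such that every coloring of the edges of K_N where each edge receives a 2-element subset of {1,2,3} contains either a copy of P_3 all of whose edge-color-sets contain 1, or a copy of P_n all of whose edge-color-sets contain 2, or a copy of P_n all of whose edge-color-sets contain 3. -/

import Mathlib

open SimpleGraph

lemma exists_good_list {n : ℕ} (hn : 3 ≤ n) (g : Fin n → Fin n)
    (hinv : ∀ u, g (g u) = u) :
    ∃ l : List (Fin n), l.Nodup ∧ l.length = n ∧
      l.Chain' (fun x y => g x ≠ y) := by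
  classical
  have hginj : Function.Injective g := Function.Involutive.injective hinv
  set A : Finset (Fin n) := Finset.univ.filter (fun u => u < g u) with hA
  set C : Finset (Fin n) := Finset.univ.filter (fun u => g u = u) with hC
  set as := A.sort (· ≤ ·) with has
  set cs := C.sort (· ≤ ·) with hcs
  set bs := as.map g with hbs
  have hmem_as : ∀ x, x ∈ as ↔ x < g x := by
    intro x; rw [has, Finset.mem_sort, hA, Finset.mem_filter]; simp
  have hmem_cs : ∀ x, x ∈ cs ↔ g x = x := by
    intro x; rw [hcs, Finset.mem_sort, hC, Finset.mem_filter]; simp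
  have hmem_bs : ∀ x, x ∈ bs ↔ g x < x := by
    intro x
    constructor
    · intro hx
      rcases List.mem_map.1 hx with ⟨a, ha, rfl⟩
      rw [hinv]; exact (hmem_as a).1 ha
    · intro hx
      exact List.mem_map.2 ⟨g x, (hmem_as _).2 (by rw [hinv]; exact hx), hinv x⟩
  have nd_as : as.Nodup := Finset.sort_nodup _ _
  have nd_cs : cs.Nodup := Finset.sort_nodup _ _
  have nd_bs : bs.Nodup := nd_as.map hginj
  set l := as ++ (cs ++ bs) with hl
  have hmem_l : ∀ x, x ∈ l := by
    intro x
    rw [hl, List.mem_append, List.mem_append]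
    rcases lt_trichotomy x (g x) with h | h | h
    · exact Or.inl ((hmem_as x).2 h)
    · exact Or.inr (Or.inl ((hmem_cs x).2 h.symm))
    · exact Or.inr (Or.inr ((hmem_bs x).2 h))
  have nd_l : l.Nodup := by
    rw [hl, List.nodup_append, List.nodup_append]
    refine ⟨nd_as, ⟨nd_cs, nd_bs, ?_⟩, ?_⟩
    · intro x hx y hx' hxy; subst hxy
      have h1 := (hmem_cs x).1 hx
      have h2 := (hmem_bs x).1 hx'
      rw [h1] at h2; exact lt_irrefl _ h2
    · intro x hx y hx' hxy; subst hxy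
      have h1 := (hmem_as x).1 hx
      rcases List.mem_append.1 hx' with h | h
      · have h2 := (hmem_cs x).1 h
        rw [h2] at h1; exact lt_irrefl _ h1
      · have h2 := (hmem_bs x).1 h
        exact lt_asymm h1 h2
  have hlen : l.length = n := by
    have h1 : l.toFinset = Finset.univ :=
      Finset.eq_univ_iff_forall.2 (fun x => List.mem_toFinset.2 (hmem_l x))
    have h2 := List.toFinset_card_of_nodup nd_l
    rw [h1] at h2
    simpa using h2.symm
  refine ⟨l, nd_l, hlen, ?_⟩
  rw [hl]; show List.IsChain _ _; rw [List.isChain_append]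
  refine ⟨?_, ?_, ?_⟩
  · refine List.Pairwise.isChain (List.Pairwise.imp_of_mem ?_ nd_as)
    intro a b ha hb _ hgab
    have h1 := (hmem_as a).1 ha
    have h2 := (hmem_as b).1 hb
    rw [hgab] at h1
    have : g b = a := by rw [← hgab, hinv]
    rw [this] at h2
    exact lt_asymm h1 h2
  · rw [List.isChain_append]
    refine ⟨?_, ?_, ?_⟩
    · refine List.Pairwise.isChain (List.Pairwise.imp_of_mem ?_ nd_cs)
      intro a b ha hb hne hgab
      have h1 := (hmem_cs a).1 ha
      rw [h1] at hgab; exact hne hgab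
    · refine List.Pairwise.isChain (List.Pairwise.imp_of_mem ?_ nd_bs)
      intro a b ha hb _ hgab
      have h1 := (hmem_bs a).1 ha
      have h2 := (hmem_bs b).1 hb
      rw [hgab] at h1
      have : g b = a := by rw [← hgab, hinv]
      rw [this] at h2
      exact lt_asymm h1 h2
    · intro x hx y hy hgxy
      have h1 := (hmem_cs x).1 (List.mem_of_mem_getLast? hx)
      have h2 := (hmem_bs y).1 (List.mem_of_mem_head? hy)
      rw [h1] at hgxy
      rw [hgxy] at h1
      rw [h1] at h2
      exact lt_irrefl _ h2
  · intro x hx y hy hgxy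
    have hxas := List.mem_of_mem_getLast? hx
    by_cases hcse : cs = []
    · -- boundary as -> bs
      rw [hcse, List.nil_append] at hy
      -- as has length ≥ 2
      have hlena : 2 ≤ as.length := by
        have : l.length = as.length + (cs.length + bs.length) := by
          rw [hl]; simp
        have hbl : bs.length = as.length := by rw [hbs]; simp
        rw [hcse] at this
        simp [hbl] at this
        omega
      rcases as with _ | ⟨a, as'⟩
      · simp at hlena
      rcases as' with _ | ⟨a', t⟩
      · simp at hlena
      -- y = g a
      have hy' : y = g a := by
        rw [hbs] at hy
        simp at hy
        exact hy.symm
      -- x ∈ a' :: t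
      have hx' : x ∈ a' :: t := by
        rw [List.getLast?_cons_cons] at hx
        exact List.mem_of_mem_getLast? hx
      have hne : x ≠ a := by
        intro h
        rw [h] at hx'
        exact (List.nodup_cons.1 nd_as).1 hx'
      rw [hy'] at hgxy
      exact hne (hginj hgxy)
    · -- head of cs ++ bs is in cs
      have hycs : y ∈ cs := by
        rcases cs with _ | ⟨c, cs'⟩
        · exact absurd rfl hcse
        · simp at hy
          rw [hy]; exact List.mem_cons_self
      have h1 := (hmem_as x).1 hxas
      have h2 := (hmem_cs y).1 hycs
      rw [hgxy] at h1
      have : g y = x := by rw [← hgxy, hinv]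
      rw [h2] at this
      rw [← this] at h1
      exact lt_irrefl _ h1

theorem setRamsey_three_two_P3_Pn_Pn (n : ℕ) (hn : 2 ≤ n) :
    IsLeast {N : ℕ | ∀ χ : Sym2 (Fin N) → Finset (Fin 3),
      (∀ e : Sym2 (Fin N), ¬ e.IsDiag → (χ e).card = 2) →
      ((∃ f : Fin 3 → Fin N, Function.Injective f ∧
          ∀ u v, (pathGraph 3).Adj u v → (0 : Fin 3) ∈ χ s(f u, f v)) ∨
       (∃ f : Fin n → Fin N, Function.Injective f ∧
          ∀ u v, (pathGraph n).Adj u v → (1 : Fin 3) ∈ χ s(f u, f v)) ∨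
       (∃ f : Fin n → Fin N, Function.Injective f ∧
          ∀ u v, (pathGraph n).Adj u v → (2 : Fin 3) ∈ χ s(f u, f v)))} n := by
  constructor
  · -- membership : n works
    intro χ hcard
    rcases Nat.lt_or_ge n 3 with h3 | h3
    · -- case n = 2
      have hn2 : n = 2 := by omega
      subst hn2
      have hdiag : ¬ (s((0:Fin 2),(1:Fin 2)) : Sym2 (Fin 2)).IsDiag := by decide
      have hc := hcard _ hdiag
      have h12 : (1:Fin 3) ∈ χ s(0,1) ∨ (2:Fin 3) ∈ χ s(0,1) := by
        have : ∀ s : Finset (Fin 3), s.card = 2 → (1:Fin 3) ∈ s ∨ (2:Fin 3) ∈ s := by decide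
        exact this _ hc
      have hpath : ∀ u v : Fin 2, (pathGraph 2).Adj u v → s(u,v) = s((0:Fin 2),1) := by
        intro u v h
        rw [pathGraph_adj] at h
        fin_cases u <;> fin_cases v <;> simp_all <;> rw [Sym2.eq_swap]
      rcases h12 with h | h
      · right; left
        exact ⟨fun x => x, fun a b hab => hab, fun u v huv => by
          show (1:Fin 3) ∈ χ s(u,v); rw [hpath u v huv]; exact h⟩
      · right; right
        exact ⟨fun x => x, fun a b hab => hab, fun u v huv => by
          show (2:Fin 3) ∈ χ s(u,v); rw [hpath u v huv]; exact h⟩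
    · by_cases hP3 : ∃ x y z : Fin n, x ≠ y ∧ y ≠ z ∧ x ≠ z ∧
          (0:Fin 3) ∈ χ s(x,y) ∧ (0:Fin 3) ∈ χ s(y,z)
      · obtain ⟨x, y, z, hxy, hyz, hxz, ha, hb⟩ := hP3
        left
        refine ⟨![x,y,z], ?_, ?_⟩
        · intro a b hab
          fin_cases a <;> fin_cases b <;> simp_all
        · intro u v huv
          rw [pathGraph_adj] at huv
          fin_cases u <;> fin_cases v <;> simp_all
          · rw [Sym2.eq_swap]; exact ha
          · rw [Sym2.eq_swap]; exact hb
      · right; left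
        classical
        set Bad : Fin n → Fin n → Prop := fun u v => u ≠ v ∧ (1:Fin 3) ∉ χ s(u,v) with hBad
        have hzero : ∀ u v, Bad u v → (0:Fin 3) ∈ χ s(u,v) := by
          intro u v hv
          have hc : (χ s(u,v)).card = 2 :=
            hcard _ (by simp [Sym2.mk_isDiag_iff]; exact hv.1)
          have key : ∀ s : Finset (Fin 3), s.card = 2 → (1:Fin 3) ∉ s → (0:Fin 3) ∈ s := by
            decide
          exact key _ hc hv.2
        have hBs : ∀ u v, Bad u v → Bad v u := by
          intro u v hv
          exact ⟨hv.1.symm, by rw [Sym2.eq_swap]; exact hv.2⟩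
        have huniq : ∀ u v w, Bad u v → Bad u w → v = w := by
          intro u v w hv hw
          by_contra hvw
          exact hP3 ⟨v, u, w, Ne.symm hv.1, hw.1, hvw,
            by rw [Sym2.eq_swap]; exact hzero _ _ hv, hzero _ _ hw⟩
        set g : Fin n → Fin n := fun u => if h : ∃ v, Bad u v then h.choose else u with hg
        have hgBad : ∀ u v, Bad u v → g u = v := by
          intro u v hv
          have h : ∃ v, Bad u v := ⟨v, hv⟩
          have : g u = h.choose := by simp only [hg]; rw [dif_pos h]
          rw [this]
          exact huniq u _ v h.choose_spec hv
        have hinv : ∀ u, g (g u) = u := by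
          intro u
          by_cases h : ∃ v, Bad u v
          · have h1 : Bad u (g u) := by
              have : g u = h.choose := by simp only [hg]; rw [dif_pos h]
              rw [this]; exact h.choose_spec
            exact hgBad _ _ (hBs _ _ h1)
          · have h0 : g u = u := by simp only [hg]; rw [dif_neg h]
            rw [h0, h0]
        obtain ⟨l, nd, hlen, hch⟩ := exists_good_list h3 g hinv
        set f : Fin n → Fin n := fun i => l.get ⟨i.val, by rw [hlen]; exact i.isLt⟩ with hf
        have hfinj : Function.Injective f := by
          intro a b hab
          have h1 := List.nodup_iff_injective_get.1 nd hab
          have h2 : (a:ℕ) = (b:ℕ) := by simpa using h1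
          exact Fin.ext h2
        have hmain : ∀ u v : Fin n, (u:ℕ) + 1 = (v:ℕ) → (1:Fin 3) ∈ χ s(f u, f v) := by
          intro u v huv
          have hlt : (u:ℕ) < l.length - 1 := by
            have := v.isLt; omega
          have hR := List.isChain_iff_getElem.1 hch u.val (by omega)
          by_contra h1
          have hne : f u ≠ f v := by
            intro h
            have := hfinj h
            rw [this] at huv
            omega
          have hBaduv : Bad (f u) (f v) := ⟨hne, h1⟩
          have hgf := hgBad _ _ hBaduv
          have hfv : f v = l.get ⟨u.val + 1, by omega⟩ := by
            simp only [hf]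
            congr 1
            exact Fin.ext (by simp [← huv])
          rw [hfv] at hgf
          exact hR hgf
        refine ⟨f, hfinj, ?_⟩
        intro u v hadj
        rw [pathGraph_adj] at hadj
        rcases hadj with h | h
        · exact hmain u v h
        · rw [Sym2.eq_swap]; exact hmain v u h
  · -- lower bound
    intro N hN
    by_contra hlt
    push_neg at hlt
    have hmem := hN (fun _ => ({1,2} : Finset (Fin 3)))
      (fun e _ => show ({1,2} : Finset (Fin 3)).card = 2 by decide)
    rcases hmem with ⟨f, hf, h0⟩ | ⟨f, hf, _⟩ | ⟨f, hf, _⟩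
    · have hadj : (pathGraph 3).Adj 0 1 := by
        rw [pathGraph_adj]; left; rfl
      have := h0 0 1 hadj
      exact absurd this (show (0:Fin 3) ∉ ({1,2} : Finset (Fin 3)) by decide)
    · have := Fintype.card_le_of_injective f hf
      simp at this; omega
    · have := Fintype.card_le_of_injective f hf
      simp at this; omega
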